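/- arXiv:quant-ph/0608146 — 2 statements merged into one kernel-verified Lean document; each statement's English description precedes it below -/
import Mathlib

section
/- Let B_1 and B_2 be real symmetric matrices and D_1, D_2 diagonal matrices such that D_1 - B_1, D_1 + B_1, D_2 - B_2, and D_2 + B_2 are all positive semidefinite. Then (D_1 ⊗ D_2) - (B_1 ⊗ B_2) is positive semidefinite. -/
open Kronecker Matrix

lemma psd_kron {m k : ℕ} {A : Matrix (Fin m) (Fin m) ℝ} {B : Matrix (Fin k) (Fin k) ℝ}
    (hA : A.PosSemidef) (hB : B.PosSemidef) : (A ⊗ₖ B).PosSemidef := by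
  exact hA.kronecker hB

lemma psd_smul {n : Type*} [Fintype n] {A : Matrix n n ℝ} (hA : A.PosSemidef)
    {c : ℝ} (hc : 0 ≤ c) : (c • A).PosSemidef := by
  refine ⟨?_, fun x => ?_⟩
  · rw [Matrix.IsHermitian, Matrix.conjTranspose_smul, hA.1.eq, star_trivial]
  exact (hA.smul hc).2 x

theorem kron_psd_of_plus_minus {m k : ℕ}
    (B₁ D₁ : Matrix (Fin m) (Fin m) ℝ) (B₂ D₂ : Matrix (Fin k) (Fin k) ℝ)
    (hB₁ : B₁.IsSymm) (hB₂ : B₂.IsSymm) (hD₁ : D₁.IsDiag) (hD₂ : D₂.IsDiag)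
    (h₁m : (D₁ - B₁).PosSemidef) (h₁p : (D₁ + B₁).PosSemidef)
    (h₂m : (D₂ - B₂).PosSemidef) (h₂p : (D₂ + B₂).PosSemidef) :
    (D₁ ⊗ₖ D₂ - B₁ ⊗ₖ B₂).PosSemidef := by
  have key : D₁ ⊗ₖ D₂ - B₁ ⊗ₖ B₂ =
      (2⁻¹ : ℝ) • ((D₁ - B₁) ⊗ₖ (D₂ + B₂) + (D₁ + B₁) ⊗ₖ (D₂ - B₂)) := by
    ext i j
    simp [Matrix.kroneckerMap_apply, Matrix.sub_apply, Matrix.add_apply, Matrix.smul_apply]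
    ring
  rw [key]
  exact psd_smul ((psd_kron h₁m h₂p).add (psd_kron h₁p h₂m)) (by norm_num : (0:ℝ) ≤ 2⁻¹)
end

section
/- Define the quantum bias of an XOR game with cost matrix A (an S×T real matrix) as ε(A) = sup over unit vectors {x_s}_{s∈S}, {y_t}_{t∈T} in some real inner product space of ∑_{s,t} A_{s,t} (x_s · y_t). Then ε(A) is multiplicative under Kronecker product: ε(A_1 ⊗ A_2) = ε(A_1) · ε(A_2) for any real matrices A_1, A_2. -/
open Kronecker RealInnerProductSpace

/-- The quantum bias of an XOR game with cost matrix `A`, in Tsirelson's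
vector formulation: the supremum over finite families of real unit vectors. -/
noncomputable def quantumBias {S T : Type*} [Fintype S] [Fintype T]
    (A : Matrix S T ℝ) : ℝ :=
  sSup { r : ℝ | ∃ (d : ℕ) (x : S → EuclideanSpace ℝ (Fin d))
      (y : T → EuclideanSpace ℝ (Fin d)),
      (∀ s, ‖x s‖ = 1) ∧ (∀ t, ‖y t‖ = 1) ∧
      r = ∑ s : S, ∑ t : T, A s t * ⟪x s, y t⟫ }

namespace QB

variable {S T : Type*} [Fintype S] [Fintype T]

def biasSet (A : Matrix S T ℝ) : Set ℝ :=
  { r : ℝ | ∃ (d : ℕ) (x : S → EuclideanSpace ℝ (Fin d))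
      (y : T → EuclideanSpace ℝ (Fin d)),
      (∀ s, ‖x s‖ = 1) ∧ (∀ t, ‖y t‖ = 1) ∧
      r = ∑ s : S, ∑ t : T, A s t * ⟪x s, y t⟫ }

lemma quantumBias_eq (A : Matrix S T ℝ) : quantumBias A = sSup (biasSet A) := rfl

def famValue (A : Matrix S T ℝ) {ι : Type*} [Fintype ι]
    (x : S → ι → ℝ) (y : T → ι → ℝ) : ℝ :=
  ∑ s, ∑ t, A s t * ∑ i, x s i * y t i

def UnitFam {α ι : Type*} [Fintype ι] (x : α → ι → ℝ) : Prop :=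
  ∀ a, ∑ i, x a i * x a i = 1

lemma famValue_mem_biasSet (A : Matrix S T ℝ) {ι : Type*} [Fintype ι]
    {x : S → ι → ℝ} {y : T → ι → ℝ} (hx : UnitFam x) (hy : UnitFam y) :
    famValue A x y ∈ biasSet A := by
  classical
  let e := Fintype.equivFin ι
  have hnorm : ∀ (f : ι → ℝ), (∑ i, f i * f i) = 1 →
      ‖((WithLp.equiv 2 (∀ _ : Fin (Fintype.card ι), ℝ)).symm (fun k => f (e.symm k)) :
        EuclideanSpace ℝ (Fin (Fintype.card ι)))‖ = 1 := by
    intro f hf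
    rw [EuclideanSpace.norm_eq]
    simp only [WithLp.equiv_symm_apply, WithLp.ofLp_toLp, Real.norm_eq_abs, sq_abs]
    rw [Equiv.sum_comp e.symm (fun i => f i ^ 2)]
    rw [show (∑ i, f i ^ 2) = ∑ i, f i * f i by simp [pow_two]]
    rw [hf, Real.sqrt_one]
  refine ⟨Fintype.card ι,
    fun s => (WithLp.equiv 2 _).symm (fun k => x s (e.symm k)),
    fun t => (WithLp.equiv 2 _).symm (fun k => y t (e.symm k)),
    fun s => hnorm _ (hx s), fun t => hnorm _ (hy t), ?_⟩
  unfold famValue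
  refine Finset.sum_congr rfl fun s _ => Finset.sum_congr rfl fun t _ => ?_
  congr 1
  rw [PiLp.inner_apply]
  simp only [WithLp.equiv_symm_apply, WithLp.ofLp_toLp, RCLike.inner_apply, starRingEnd_apply, star_trivial]
  exact (Equiv.sum_comp e.symm (fun i => x s i * y t i)).symm.trans
    (Finset.sum_congr rfl fun i _ => mul_comm _ _)

lemma exists_fam_of_mem_biasSet {A : Matrix S T ℝ} {r : ℝ} (hr : r ∈ biasSet A) :
    ∃ (d : ℕ) (x : S → Fin d → ℝ) (y : T → Fin d → ℝ),
      UnitFam x ∧ UnitFam y ∧ r = famValue A x y := by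
  obtain ⟨d, x, y, hx, hy, hr⟩ := hr
  have hunit : ∀ (z : EuclideanSpace ℝ (Fin d)), ‖z‖ = 1 → ∑ i, z i * z i = 1 := by
    intro z hz
    rw [EuclideanSpace.norm_eq] at hz
    have := Real.sqrt_eq_one.mp hz
    simpa [pow_two, Real.norm_eq_abs, abs_mul_abs_self] using this
  refine ⟨d, fun s k => x s k, fun t k => y t k, fun s => hunit _ (hx s),
    fun t => hunit _ (hy t), hr.trans ?_⟩
  unfold famValue
  refine Finset.sum_congr rfl fun s _ => Finset.sum_congr rfl fun t _ => ?_
  simp [PiLp.inner_apply, RCLike.inner_apply, mul_comm]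


variable (S T) in
def gramSet : Set (Matrix (S ⊕ T) (S ⊕ T) ℝ) :=
  {G | (∀ z : S ⊕ T → ℝ, 0 ≤ ∑ i, ∑ j, z i * G i j * z j) ∧
       (∀ i j, G i j = G j i) ∧ (∀ i, G i i = 1)}

def FVal (A : Matrix S T ℝ) (G : Matrix (S ⊕ T) (S ⊕ T) ℝ) : ℝ :=
  ∑ s, ∑ t, A s t * G (Sum.inl s) (Sum.inr t)

lemma qf_two {I : Type*} [Fintype I] [DecidableEq I] (G : Matrix I I ℝ) {i j : I}
    (hij : i ≠ j) (ci cj : ℝ) :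
    ∑ k, ∑ l, (fun m => if m = i then ci else if m = j then cj else 0) k * G k l *
      (fun m => if m = i then ci else if m = j then cj else 0) l =
    (G i i * ci + G i j * cj) * ci + (G j i * ci + G j j * cj) * cj := by
  set z : I → ℝ := fun m => if m = i then ci else if m = j then cj else 0 with hz
  have expand : ∀ (w : I → ℝ), ∑ l, w l * z l = w i * ci + w j * cj := by
    intro w
    have h1 : ∀ l, w l * z l =
        (if l = i then w i * ci else 0) + (if l = j then w j * cj else 0) := by
      intro l
      by_cases h1 : l = i
      · subst h1; simp [hz, hij]
      · by_cases h2 : l = j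
        · subst h2; simp [hz, h1]
        · simp [hz, h1, h2]
    rw [Finset.sum_congr rfl fun l _ => h1 l, Finset.sum_add_distrib]
    simp [Finset.sum_ite_eq']
  have inner : ∀ k, ∑ l, z k * G k l * z l = z k * (G k i * ci + G k j * cj) := by
    intro k
    have h := expand (fun k' => z k * G k k')
    calc ∑ l, z k * G k l * z l = ∑ l, (fun k' => z k * G k k') l * z l :=
          Finset.sum_congr rfl fun l _ => by ring
      _ = z k * G k i * ci + z k * G k j * cj := h
      _ = z k * (G k i * ci + G k j * cj) := by ring
  rw [Finset.sum_congr rfl fun k _ => inner k]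
  calc ∑ k, z k * (G k i * ci + G k j * cj)
      = ∑ k, (fun k' => G k' i * ci + G k' j * cj) k * z k :=
        Finset.sum_congr rfl fun k _ => mul_comm _ _
    _ = _ := expand _

lemma gramSet_bounded {G : Matrix (S ⊕ T) (S ⊕ T) ℝ} (hG : G ∈ gramSet S T)
    (i j : S ⊕ T) : G i j ∈ Set.Icc (-1 : ℝ) 1 := by
  classical
  obtain ⟨hpsd, hsym, hdiag⟩ := hG
  by_cases hij : i = j
  · subst hij; rw [hdiag]; exact ⟨by norm_num, le_refl _⟩
  · have h1 := hpsd (fun m => if m = i then 1 else if m = j then 1 else 0)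
    have h2 := hpsd (fun m => if m = i then 1 else if m = j then -1 else 0)
    rw [qf_two G hij 1 1] at h1
    rw [qf_two G hij 1 (-1)] at h2
    rw [hdiag i, hdiag j, hsym j i] at h1 h2
    constructor <;> nlinarith [h1, h2]

lemma continuous_qf (z : S ⊕ T → ℝ) :
    Continuous (fun G : Matrix (S ⊕ T) (S ⊕ T) ℝ => ∑ i, ∑ j, z i * G i j * z j) := by
  refine continuous_finset_sum _ fun i _ => continuous_finset_sum _ fun j _ => ?_
  have hij : Continuous fun G : Matrix (S ⊕ T) (S ⊕ T) ℝ => G i j :=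
    (continuous_apply j).comp (continuous_apply i)
  exact (continuous_const.mul hij).mul continuous_const

lemma continuous_FVal (A : Matrix S T ℝ) : Continuous (FVal A) :=
  continuous_finset_sum _ fun s _ => continuous_finset_sum _ fun t _ =>
    continuous_const.mul ((continuous_apply (Sum.inr t)).comp (continuous_apply (Sum.inl s)))

lemma gramSet_isClosed : IsClosed (gramSet S T) := by
  have h1 : IsClosed {G : Matrix (S ⊕ T) (S ⊕ T) ℝ |
      ∀ z : S ⊕ T → ℝ, 0 ≤ ∑ i, ∑ j, z i * G i j * z j} := by
    rw [Set.setOf_forall]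
    exact isClosed_iInter fun z => isClosed_le continuous_const (continuous_qf z)
  have h2 : IsClosed {G : Matrix (S ⊕ T) (S ⊕ T) ℝ | ∀ i j, G i j = G j i} := by
    rw [Set.setOf_forall]
    refine isClosed_iInter fun i => ?_
    rw [Set.setOf_forall]
    exact isClosed_iInter fun j => isClosed_eq
      ((continuous_apply j).comp (continuous_apply i))
      ((continuous_apply i).comp (continuous_apply j))
  have h3 : IsClosed {G : Matrix (S ⊕ T) (S ⊕ T) ℝ | ∀ i, G i i = 1} := by
    rw [Set.setOf_forall]
    exact isClosed_iInter fun i => isClosed_eq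
      ((continuous_apply i).comp (continuous_apply i)) continuous_const
  exact (h1.inter (h2.inter h3))

lemma gramSet_nonempty : (gramSet S T).Nonempty := by
  classical
  refine ⟨(1 : Matrix (S ⊕ T) (S ⊕ T) ℝ), ?_, ?_, ?_⟩
  · intro z
    have : ∀ i, ∑ j, z i * (1 : Matrix (S ⊕ T) (S ⊕ T) ℝ) i j * z j = z i * z i := by
      intro i
      rw [Finset.sum_eq_single i]
      · simp [Matrix.one_apply]
      · intro j _ hj; simp [Matrix.one_apply, Ne.symm hj]
      · intro h; exact absurd (Finset.mem_univ i) h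
    rw [Finset.sum_congr rfl fun i _ => this i]
    exact Finset.sum_nonneg fun i _ => mul_self_nonneg _
  · intro i j
    by_cases h : i = j
    · subst h; rfl
    · rw [Matrix.one_apply_ne h, Matrix.one_apply_ne (Ne.symm h)]
  · intro i; simp

lemma exists_max_gram (A : Matrix S T ℝ) :
    ∃ G ∈ gramSet S T, ∀ G' ∈ gramSet S T, FVal A G' ≤ FVal A G := by
  have hcomp : IsCompact (gramSet S T) := by
    have hbox : IsCompact (Set.pi Set.univ fun _ : S ⊕ T =>
        Set.pi Set.univ fun _ : S ⊕ T => Set.Icc (-1 : ℝ) 1) :=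
      isCompact_univ_pi fun _ => isCompact_univ_pi fun _ => isCompact_Icc
    refine IsCompact.of_isClosed_subset hbox gramSet_isClosed ?_
    intro G hG
    refine Set.mem_univ_pi.mpr ?_
    intro i
    rw [Set.mem_univ_pi]
    intro j
    exact gramSet_bounded hG i j
  obtain ⟨G, hG, hmax⟩ := hcomp.exists_isMaxOn gramSet_nonempty (continuous_FVal A).continuousOn
  exact ⟨G, hG, fun G' hG' => hmax hG'⟩

lemma fam_of_gram {G : Matrix (S ⊕ T) (S ⊕ T) ℝ} (hG : G ∈ gramSet S T) :
    ∃ (x : S → (S ⊕ T) → ℝ) (y : T → (S ⊕ T) → ℝ), UnitFam x ∧ UnitFam y ∧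
      (∀ s t, ∑ k, x s k * y t k = G (Sum.inl s) (Sum.inr t)) := by
  classical
  obtain ⟨hpsd', hsym, hdiag⟩ := hG
  have hpsd : G.PosSemidef := by
    refine Matrix.PosSemidef.of_dotProduct_mulVec_nonneg ?_ ?_
    · ext i j
      simp only [Matrix.conjTranspose_apply, star_trivial]
      exact hsym j i
    · intro z
      have h := hpsd' z
      calc (0:ℝ) ≤ ∑ i, ∑ j, z i * G i j * z j := h
        _ = dotProduct (star z) (G.mulVec z) := by
            simp only [dotProduct, Matrix.mulVec, star_trivial, Pi.star_apply]
            refine Finset.sum_congr rfl fun i _ => ?_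
            rw [Finset.mul_sum]
            exact Finset.sum_congr rfl fun j _ => by ring
  obtain ⟨B, hB⟩ := (by open scoped MatrixOrder in exact CStarAlgebra.nonneg_iff_eq_star_mul_self.mp hpsd.nonneg : ∃ B, _ = star B * B)
  have hentry : ∀ i j, G i j = ∑ k, B k i * B k j := by
    intro i j
    rw [hB]
    simp [Matrix.star_eq_conjTranspose, Matrix.mul_apply, Matrix.conjTranspose_apply]
  refine ⟨fun s k => B k (Sum.inl s), fun t k => B k (Sum.inr t), ?_, ?_, ?_⟩
  · intro s; rw [← hentry]; exact hdiag _
  · intro t; rw [← hentry]; exact hdiag _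
  · intro s t; rw [← hentry]

lemma gram_of_fam {ι : Type*} [Fintype ι] {x : S → ι → ℝ} {y : T → ι → ℝ}
    (hx : UnitFam x) (hy : UnitFam y) :
    (Matrix.of fun i j => ∑ k, Sum.elim x y i k * Sum.elim x y j k) ∈ gramSet S T := by
  set v : S ⊕ T → ι → ℝ := Sum.elim x y with hv
  refine ⟨?_, ?_, ?_⟩
  · intro z
    have key : ∑ i, ∑ j, z i * (∑ k, v i k * v j k) * z j
        = ∑ k, (∑ i, z i * v i k) * (∑ j, z j * v j k) := by
      have h1 : ∀ i j, z i * (∑ k, v i k * v j k) * z j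
          = ∑ k, (z i * v i k) * (z j * v j k) := by
        intro i j
        rw [Finset.mul_sum, Finset.sum_mul]
        exact Finset.sum_congr rfl fun k _ => by ring
      simp_rw [h1]
      rw [show (∑ i, ∑ j, ∑ k, (z i * v i k) * (z j * v j k))
          = ∑ i, ∑ k, ∑ j, (z i * v i k) * (z j * v j k) from
          Finset.sum_congr rfl fun i _ => Finset.sum_comm]
      rw [Finset.sum_comm]
      refine Finset.sum_congr rfl fun k _ => ?_
      rw [Finset.sum_mul_sum]
    simp only [Matrix.of_apply]
    rw [key]
    exact Finset.sum_nonneg fun k _ => mul_self_nonneg _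
  · intro i j
    simp only [Matrix.of_apply]
    exact Finset.sum_congr rfl fun k _ => mul_comm _ _
  · intro i
    cases i with
    | inl s => simpa [hv] using hx s
    | inr t => simpa [hv] using hy t


lemma FVal_gram (A : Matrix S T ℝ) {ι : Type*} [Fintype ι]
    (x : S → ι → ℝ) (y : T → ι → ℝ) :
    FVal A (Matrix.of fun i j => ∑ k, Sum.elim x y i k * Sum.elim x y j k)
      = famValue A x y := by
  unfold FVal famValue
  simp

theorem core (A : Matrix S T ℝ) :
    IsGreatest (biasSet A) (quantumBias A) ∧
    ∃ (x : S → (S ⊕ T) → ℝ) (y : T → (S ⊕ T) → ℝ),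
      UnitFam x ∧ UnitFam y ∧ famValue A x y = quantumBias A := by
  obtain ⟨G₀, hG₀, hmax⟩ := exists_max_gram A
  obtain ⟨x, y, hx, hy, hxy⟩ := fam_of_gram hG₀
  have hfv : famValue A x y = FVal A G₀ := by
    unfold famValue FVal
    exact Finset.sum_congr rfl fun s _ => Finset.sum_congr rfl fun t _ => by rw [hxy]
  have hub : ∀ r ∈ biasSet A, r ≤ FVal A G₀ := by
    intro r hr
    obtain ⟨d, x', y', hx', hy', hr'⟩ := exists_fam_of_mem_biasSet hr
    rw [hr']
    calc famValue A x' y' = FVal A (Matrix.of fun i j => ∑ k,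
          Sum.elim x' y' i k * Sum.elim x' y' j k) := (FVal_gram A x' y').symm
      _ ≤ FVal A G₀ := hmax _ (gram_of_fam hx' hy')
  have hmem : FVal A G₀ ∈ biasSet A := hfv ▸ famValue_mem_biasSet A hx hy
  have hgreat : IsGreatest (biasSet A) (FVal A G₀) := ⟨hmem, hub⟩
  have hq : quantumBias A = FVal A G₀ := hgreat.csSup_eq
  rw [hq]
  exact ⟨hgreat, x, y, hx, hy, hfv⟩

lemma famValue_le (A : Matrix S T ℝ) {ι : Type*} [Fintype ι]
    {x : S → ι → ℝ} {y : T → ι → ℝ} (hx : UnitFam x) (hy : UnitFam y) :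
    famValue A x y ≤ quantumBias A :=
  (core A).1.2 (famValue_mem_biasSet A hx hy)

lemma sqrt_bound {p q : ℝ} (hp0 : 0 ≤ p) (hp1 : p ≤ 1) (hq0 : 0 ≤ q) (hq1 : q ≤ 1) :
    |Real.sqrt (1-p) * Real.sqrt (1-q) - (1 - (p+q)/2)| ≤ (p+q)^2 := by
  set s := Real.sqrt (1-p) with hs
  set t := Real.sqrt (1-q) with ht
  have hs0 : 0 ≤ s := Real.sqrt_nonneg _
  have ht0 : 0 ≤ t := Real.sqrt_nonneg _
  have hs2 : s^2 = 1-p := Real.sq_sqrt (by linarith)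
  have ht2 : t^2 = 1-q := Real.sq_sqrt (by linarith)
  rw [abs_le]
  constructor
  · rw [neg_le, neg_sub]
    by_cases h : 1 - (p+q)/2 - (p+q)^2 ≤ 0
    · nlinarith [mul_nonneg hs0 ht0]
    · push_neg at h
      have hσ : p + q ≤ 4/5 := by nlinarith [sq_nonneg (p+q-1)]
      have hfac : 0 ≤ 7/4 - (p+q) - (p+q)^2 := by nlinarith
      have hX2 : (1 - (p+q)/2 - (p+q)^2)^2 ≤ (s*t)^2 := by
        have hst2 : (s*t)^2 = (1-p)*(1-q) := by rw [mul_pow, hs2, ht2]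
        rw [hst2]
        nlinarith [mul_nonneg hp0 hq0, mul_nonneg (sq_nonneg (p+q)) hfac]
      nlinarith [mul_nonneg hs0 ht0, hX2, h]
  · nlinarith [sq_nonneg (s-t)]

def Cert (A : Matrix S T ℝ) (u : S → ℝ) (v : T → ℝ) : Prop :=
  ∀ (a : S → ℝ) (b : T → ℝ),
    2 * (∑ s, ∑ t, A s t * (a s * b t)) ≤ ∑ s, u s * a s ^ 2 + ∑ t, v t * b t ^ 2

lemma exists_cert (A : Matrix S T ℝ) :
    ∃ (u : S → ℝ) (v : T → ℝ),
      (∑ s, u s) = quantumBias A ∧ (∑ t, v t) = quantumBias A ∧ Cert A u v := by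
  obtain ⟨hgreat, x, y, hx, hy, hval⟩ := core A
  have hgsq : ∀ s t, (∑ i, x s i * y t i)^2 ≤ 1 := by
    intro s t
    have h := Finset.sum_mul_sq_le_sq_mul_sq Finset.univ (x s) (y t)
    have hx1 : ∑ i, x s i ^ 2 = 1 := by
      rw [← hx s]; exact Finset.sum_congr rfl fun i _ => sq (x s i) ▸ (pow_two (x s i))
    have hy1 : ∑ i, y t i ^ 2 = 1 := by
      rw [← hy t]; exact Finset.sum_congr rfl fun i _ => (pow_two (y t i))
    calc (∑ i, x s i * y t i)^2 ≤ (∑ i, x s i ^2) * ∑ i, y t i ^2 := h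
      _ = 1 := by rw [hx1, hy1, one_mul]
  have hgabs : ∀ s t, |∑ i, x s i * y t i| ≤ 1 := fun s t => abs_le.mpr
    ⟨by nlinarith [hgsq s t, sq_nonneg ((∑ i, x s i * y t i) + 1)],
     by nlinarith [hgsq s t, sq_nonneg ((∑ i, x s i * y t i) - 1)]⟩
  have hval2 : ∑ s, ∑ t, A s t * ∑ i, x s i * y t i = quantumBias A := hval
  refine ⟨fun s => ∑ t, A s t * ∑ i, x s i * y t i,
         fun t => ∑ s, A s t * ∑ i, x s i * y t i, hval2, ?_, ?_⟩
  · rw [← hval2]; exact Finset.sum_comm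
  intro a b
  set W := ∑ s, ∑ t, A s t * (a s * b t) with hW
  set Q := (∑ s, (∑ t, A s t * ∑ i, x s i * y t i) * a s ^ 2
      + ∑ t, (∑ s, A s t * ∑ i, x s i * y t i) * b t ^ 2) with hQ
  set K := ∑ s, ∑ t, |A s t| * (a s ^ 2 + b t ^ 2)^2 with hK
  have hK0 : 0 ≤ K := Finset.sum_nonneg fun s _ => Finset.sum_nonneg fun t _ =>
    mul_nonneg (abs_nonneg _) (sq_nonneg _)
  set Sig := (∑ s, a s ^ 2) + (∑ t, b t ^ 2) with hSig
  have hSig0 : 0 ≤ Sig := by positivity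
  have hmain : ∀ c : ℝ, 0 < c → c^2 * Sig ≤ 1 → 2*W - Q ≤ c^2*(2*K) := by
    intro c hc hcs
    have hc2 : (0:ℝ) < c^2 := by positivity
    have hpa : ∀ s, c^2 * a s ^2 ≤ 1 := by
      intro s
      have h1 : a s ^ 2 ≤ Sig := by
        rw [hSig]
        have h3 : a s ^ 2 ≤ ∑ s, a s ^ 2 := by
          simpa using Finset.single_le_sum (f := fun s => a s ^ 2)
            (fun i _ => sq_nonneg _) (Finset.mem_univ s)
        have h2 : (0:ℝ) ≤ ∑ t, b t ^2 := Finset.sum_nonneg fun _ _ => sq_nonneg _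
        linarith
      nlinarith
    have hpb : ∀ t, c^2 * b t ^2 ≤ 1 := by
      intro t
      have h1 : b t ^ 2 ≤ Sig := by
        rw [hSig]
        have h3 : b t ^ 2 ≤ ∑ t, b t ^ 2 := by
          simpa using Finset.single_le_sum (f := fun t => b t ^ 2)
            (fun i _ => sq_nonneg _) (Finset.mem_univ t)
        have h2 : (0:ℝ) ≤ ∑ s, a s ^2 := Finset.sum_nonneg fun _ _ => sq_nonneg _
        linarith
      nlinarith
    -- perturbed families
    set x' : S → Option (S ⊕ T) → ℝ :=
      fun s o => o.elim (c * a s) (fun i => Real.sqrt (1 - c^2 * a s^2) * x s i) with hx'def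
    set y' : T → Option (S ⊕ T) → ℝ :=
      fun t o => o.elim (c * b t) (fun i => Real.sqrt (1 - c^2 * b t^2) * y t i) with hy'def
    have hx' : UnitFam x' := by
      intro s
      rw [univ_option, Finset.sum_insertNone]
      have hD : (0:ℝ) ≤ 1 - c^2 * a s^2 := by linarith [hpa s]
      have : ∀ i : S ⊕ T, x' s (some i) * x' s (some i)
          = (1 - c^2 * a s^2) * (x s i * x s i) := by
        intro i
        simp only [hx'def, Option.elim]
        rw [show Real.sqrt (1 - c^2*a s^2) * x s i * (Real.sqrt (1 - c^2*a s^2) * x s i)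
          = Real.sqrt (1 - c^2*a s^2) ^ 2 * (x s i * x s i) from by ring, Real.sq_sqrt hD]
      rw [Finset.sum_congr rfl fun i _ => this i, ← Finset.mul_sum, hx s]
      simp only [hx'def, Option.elim]
      ring
    have hy' : UnitFam y' := by
      intro t
      rw [univ_option, Finset.sum_insertNone]
      have hD : (0:ℝ) ≤ 1 - c^2 * b t^2 := by linarith [hpb t]
      have : ∀ i : S ⊕ T, y' t (some i) * y' t (some i)
          = (1 - c^2 * b t^2) * (y t i * y t i) := by
        intro i
        simp only [hy'def, Option.elim]
        rw [show Real.sqrt (1 - c^2*b t^2) * y t i * (Real.sqrt (1 - c^2*b t^2) * y t i)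
          = Real.sqrt (1 - c^2*b t^2) ^ 2 * (y t i * y t i) from by ring, Real.sq_sqrt hD]
      rw [Finset.sum_congr rfl fun i _ => this i, ← Finset.mul_sum, hy t]
      simp only [hy'def, Option.elim]
      ring
    have hvle : famValue A x' y' ≤ quantumBias A := famValue_le A hx' hy'
    have hval' : famValue A x' y' = ∑ s, ∑ t, A s t * (c^2 * (a s * b t)
        + Real.sqrt (1 - c^2 * a s^2) * Real.sqrt (1 - c^2 * b t^2) * ∑ i, x s i * y t i) := by
      unfold famValue
      refine Finset.sum_congr rfl fun s _ => Finset.sum_congr rfl fun t _ => ?_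
      congr 1
      rw [univ_option, Finset.sum_insertNone]
      have : ∀ i : S ⊕ T, x' s (some i) * y' t (some i)
          = Real.sqrt (1 - c^2 * a s^2) * Real.sqrt (1 - c^2 * b t^2) * (x s i * y t i) := by
        intro i
        simp only [hx'def, hy'def, Option.elim]
        ring
      rw [Finset.sum_congr rfl fun i _ => this i, ← Finset.mul_sum]
      simp only [hx'def, hy'def, Option.elim]
      ring
    have key : ∀ s t,
        A s t * (∑ i, x s i * y t i) + c^2 * (A s t * (a s * b t))
          - c^2/2 * (A s t * (∑ i, x s i * y t i) * (a s^2 + b t^2))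
          - c^4 * (|A s t| * (a s^2 + b t^2)^2)
        ≤ A s t * (c^2 * (a s * b t)
          + Real.sqrt (1 - c^2 * a s^2) * Real.sqrt (1 - c^2 * b t^2) * ∑ i, x s i * y t i) := by
      intro s t
      set G := ∑ i, x s i * y t i with hG
      set p := c^2 * a s^2 with hp
      set q := c^2 * b t^2 with hq
      have hb := sqrt_bound (p := p) (q := q) (by positivity) (hpa s) (by positivity) (hpb t)
      have habs : |A s t * G| ≤ |A s t| := by
        rw [abs_mul]
        calc |A s t| * |G| ≤ |A s t| * 1 :=
          mul_le_mul_of_nonneg_left (hgabs s t) (abs_nonneg _)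
        _ = |A s t| := mul_one _
      have hprod : -(|A s t| * (p+q)^2) ≤ A s t * G *
          (Real.sqrt (1-p) * Real.sqrt (1-q) - (1 - (p+q)/2)) := by
        have h1 := neg_abs_le (A s t * G * (Real.sqrt (1-p) * Real.sqrt (1-q) - (1 - (p+q)/2)))
        have h2 : |A s t * G * (Real.sqrt (1-p) * Real.sqrt (1-q) - (1 - (p+q)/2))|
            ≤ |A s t| * (p+q)^2 := by
          rw [abs_mul]
          exact mul_le_mul habs hb (abs_nonneg _) (abs_nonneg _)
        linarith
      have hpq : (p+q)^2 = c^4 * (a s^2 + b t^2)^2 := by rw [hp, hq]; ring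
      have hpq2 : A s t * G * (1 - (p+q)/2)
          = A s t * G - c^2/2 * (A s t * G * (a s^2 + b t^2)) := by rw [hp, hq]; ring
      have expand : A s t * (c^2 * (a s * b t)
            + Real.sqrt (1-p) * Real.sqrt (1-q) * G)
          = c^2 * (A s t * (a s * b t)) + A s t * G * (1 - (p+q)/2)
            + A s t * G * (Real.sqrt (1-p) * Real.sqrt (1-q) - (1 - (p+q)/2)) := by ring
      rw [expand, hpq2]
      rw [hpq] at hprod
      linarith
    have hsum : (∑ s, ∑ t, A s t * ∑ i, x s i * y t i) + c^2 * W - c^2/2 * Q - c^4 * K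
        ≤ famValue A x' y' := by
      rw [hval']
      have step := Finset.sum_le_sum (s := (Finset.univ : Finset S))
        (fun s _ => Finset.sum_le_sum (s := (Finset.univ : Finset T)) (fun t _ => key s t))
      calc (∑ s, ∑ t, A s t * ∑ i, x s i * y t i) + c^2 * W - c^2/2 * Q - c^4 * K
          = ∑ s, ∑ t, (A s t * (∑ i, x s i * y t i) + c^2 * (A s t * (a s * b t))
            - c^2/2 * (A s t * (∑ i, x s i * y t i) * (a s^2 + b t^2))
            - c^4 * (|A s t| * (a s^2 + b t^2)^2)) := ?_
        _ ≤ _ := step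
      -- the sum rearrangement
      have e1 : ∑ s, ∑ t, (A s t * (∑ i, x s i * y t i) + c^2 * (A s t * (a s * b t))
            - c^2/2 * (A s t * (∑ i, x s i * y t i) * (a s^2 + b t^2))
            - c^4 * (|A s t| * (a s^2 + b t^2)^2))
          = (∑ s, ∑ t, A s t * ∑ i, x s i * y t i) + c^2 * (∑ s, ∑ t, A s t * (a s * b t))
            - c^2/2 * (∑ s, ∑ t, A s t * (∑ i, x s i * y t i) * (a s^2 + b t^2))
            - c^4 * (∑ s, ∑ t, |A s t| * (a s^2 + b t^2)^2) := by
        simp only [Finset.sum_add_distrib, Finset.sum_sub_distrib, Finset.mul_sum]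
      have e2 : ∑ s, ∑ t, A s t * (∑ i, x s i * y t i) * (a s^2 + b t^2) = Q := by
        rw [hQ]
        have e3 : ∀ s, ∑ t, A s t * (∑ i, x s i * y t i) * (a s^2 + b t^2)
            = (∑ t, A s t * (∑ i, x s i * y t i)) * a s^2
              + ∑ t, A s t * (∑ i, x s i * y t i) * b t^2 := by
          intro s
          rw [Finset.sum_mul, ← Finset.sum_add_distrib]
          exact Finset.sum_congr rfl fun t _ => by ring
        rw [Finset.sum_congr rfl fun s _ => e3 s, Finset.sum_add_distrib]
        congr 1
        rw [Finset.sum_comm]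
        refine Finset.sum_congr rfl fun t _ => ?_
        rw [Finset.sum_mul]
      rw [e1, e2, ← hW, ← hK]
    have hcomb : c^2 * W - c^2/2 * Q ≤ c^4 * K := by
      rw [hval2] at hsum
      linarith
    have h2 : c^2 * (2*W - Q) ≤ c^2 * (c^2*(2*K)) := by nlinarith [hcomb]
    exact (mul_le_mul_iff_right₀ hc2).mp h2
  -- conclude 2W - Q ≤ 0, i.e. the certificate inequality
  by_contra hcon
  push_neg at hcon
  have hD0 : 0 < 2*W - Q := by
    rw [hW, hQ]
    linarith [hcon]
  set c := min (1 / Real.sqrt (Sig + 1)) (Real.sqrt ((2*W - Q) / (4*K + 1))) with hc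
  have hc0 : 0 < c := lt_min (by positivity) (Real.sqrt_pos.mpr (by positivity))
  have hcs : c^2 * Sig ≤ 1 := by
    have h1 : c ≤ 1 / Real.sqrt (Sig+1) := min_le_left _ _
    have h2 : c^2 ≤ 1/(Sig+1) := by
      calc c^2 ≤ (1/Real.sqrt (Sig+1))^2 := by
            apply pow_le_pow_left₀ hc0.le h1
        _ = 1/(Sig+1) := by
            rw [div_pow, one_pow, Real.sq_sqrt (by positivity)]
      
    calc c^2 * Sig ≤ (1/(Sig+1)) * Sig := mul_le_mul_of_nonneg_right h2 hSig0
      _ ≤ 1 := by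
          rw [one_div, inv_mul_le_iff₀ (by positivity)]
          linarith
  have hcd : c^2*(2*K) < 2*W - Q := by
    have h1 : c ≤ Real.sqrt ((2*W - Q)/(4*K+1)) := min_le_right _ _
    have h2 : c^2 ≤ (2*W - Q)/(4*K+1) := by
      calc c^2 ≤ Real.sqrt ((2*W - Q)/(4*K+1))^2 := by
            apply pow_le_pow_left₀ hc0.le h1
        _ = (2*W - Q)/(4*K+1) := Real.sq_sqrt (by positivity)
    calc c^2*(2*K) ≤ ((2*W - Q)/(4*K+1))*(2*K) :=
          mul_le_mul_of_nonneg_right h2 (by positivity)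
      _ < 2*W - Q := by
          rw [div_mul_eq_mul_div, div_lt_iff₀ (by positivity)]
          nlinarith
  have := hmain c hc0 hcs
  linarith

lemma cert_factor [DecidableEq S] [DecidableEq T]
    {A : Matrix S T ℝ} {u : S → ℝ} {v : T → ℝ} (h : Cert A u v) :
    ∃ (p : S → (S ⊕ T) → ℝ) (q : T → (S ⊕ T) → ℝ),
      (∀ s s', ∑ k, p s k * p s' k = if s = s' then u s else 0) ∧
      (∀ t t', ∑ k, q t k * q t' k = if t = t' then v t else 0) ∧
      (∀ s t, ∑ k, p s k * q t k = -A s t) := by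
  set M : Matrix (S ⊕ T) (S ⊕ T) ℝ := Matrix.of fun i j =>
    match i, j with
    | Sum.inl s, Sum.inl s' => if s = s' then u s else 0
    | Sum.inl s, Sum.inr t => -A s t
    | Sum.inr t, Sum.inl s => -A s t
    | Sum.inr t, Sum.inr t' => if t = t' then v t else 0
    with hM
  have hMapp_ll : ∀ s s', M (Sum.inl s) (Sum.inl s') = if s = s' then u s else 0 := fun _ _ => rfl
  have hMapp_lr : ∀ s t, M (Sum.inl s) (Sum.inr t) = -A s t := fun _ _ => rfl
  have hMapp_rl : ∀ t s, M (Sum.inr t) (Sum.inl s) = -A s t := fun _ _ => rfl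
  have hMapp_rr : ∀ t t', M (Sum.inr t) (Sum.inr t') = if t = t' then v t else 0 := fun _ _ => rfl
  have hiteS : ∀ (w : S → ℝ) (s s' : S),
      (if s = s' then w s else 0) = (if s' = s then w s' else 0) := by
    intro w s s'
    by_cases hh : s = s'
    · subst hh; rfl
    · rw [if_neg hh, if_neg (Ne.symm hh)]
  have hiteT : ∀ (w : T → ℝ) (t t' : T),
      (if t = t' then w t else 0) = (if t' = t then w t' else 0) := by
    intro w t t'
    by_cases hh : t = t'
    · subst hh; rfl
    · rw [if_neg hh, if_neg (Ne.symm hh)]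
  have hdiagS : ∀ (w cf : S → ℝ),
      ∑ s, ∑ s', cf s * (if s = s' then w s else 0) * cf s' = ∑ s, w s * cf s ^ 2 := by
    intro w cf
    refine Finset.sum_congr rfl fun s _ => ?_
    rw [Finset.sum_eq_single s]
    · rw [if_pos rfl]; ring
    · intro s' _ hs'; simp [Ne.symm hs']
    · intro hs; exact absurd (Finset.mem_univ s) hs
  have hdiagT : ∀ (w cf : T → ℝ),
      ∑ t, ∑ t', cf t * (if t = t' then w t else 0) * cf t' = ∑ t, w t * cf t ^ 2 := by
    intro w cf
    refine Finset.sum_congr rfl fun t _ => ?_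
    rw [Finset.sum_eq_single t]
    · rw [if_pos rfl]; ring
    · intro t' _ ht'; simp [Ne.symm ht']
    · intro ht; exact absurd (Finset.mem_univ t) ht
  have hpsd : M.PosSemidef := by
    refine Matrix.PosSemidef.of_dotProduct_mulVec_nonneg ?_ ?_
    · ext i j
      simp only [Matrix.conjTranspose_apply, star_trivial]
      cases i <;> cases j <;> simp only [hMapp_ll, hMapp_lr, hMapp_rl, hMapp_rr]
      · exact hiteS u _ _
      · exact hiteT v _ _
    · intro z
      have hquad : dotProduct (star z) (M.mulVec z)
          = ∑ i, ∑ j, z i * M i j * z j := by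
        simp only [dotProduct, Matrix.mulVec, star_trivial, Pi.star_apply]
        refine Finset.sum_congr rfl fun i _ => ?_
        rw [Finset.mul_sum]
        exact Finset.sum_congr rfl fun j _ => by ring
      rw [hquad]
      have hsplit : ∑ i, ∑ j, z i * M i j * z j
          = (∑ s, ∑ s', z (Sum.inl s) * M (Sum.inl s) (Sum.inl s') * z (Sum.inl s'))
          + (∑ s, ∑ t, z (Sum.inl s) * M (Sum.inl s) (Sum.inr t) * z (Sum.inr t))
          + ((∑ t, ∑ s, z (Sum.inr t) * M (Sum.inr t) (Sum.inl s) * z (Sum.inl s))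
          + (∑ t, ∑ t', z (Sum.inr t) * M (Sum.inr t) (Sum.inr t') * z (Sum.inr t'))) := by
        rw [Fintype.sum_sum_type]
        rw [Finset.sum_congr rfl fun s (_ : s ∈ Finset.univ) => Fintype.sum_sum_type _]
        rw [Finset.sum_congr rfl fun t (_ : t ∈ Finset.univ) => Fintype.sum_sum_type _]
        rw [Finset.sum_add_distrib, Finset.sum_add_distrib]
      rw [hsplit]
      simp only [hMapp_ll, hMapp_lr, hMapp_rl, hMapp_rr]
      rw [hdiagS u (fun s => z (Sum.inl s)), hdiagT v (fun t => z (Sum.inr t))]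
      have hc := h (fun s => z (Sum.inl s)) (fun t => z (Sum.inr t))
      have hcr1 : ∑ s, ∑ t, z (Sum.inl s) * -A s t * z (Sum.inr t)
          = -(∑ s, ∑ t, A s t * (z (Sum.inl s) * z (Sum.inr t))) := by
        rw [← Finset.sum_neg_distrib]
        refine Finset.sum_congr rfl fun s _ => ?_
        rw [← Finset.sum_neg_distrib]
        exact Finset.sum_congr rfl fun t _ => by ring
      have hcr2 : ∑ t, ∑ s, z (Sum.inr t) * -A s t * z (Sum.inl s)
          = -(∑ s, ∑ t, A s t * (z (Sum.inl s) * z (Sum.inr t))) := by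
        rw [Finset.sum_comm, ← Finset.sum_neg_distrib]
        refine Finset.sum_congr rfl fun s _ => ?_
        rw [← Finset.sum_neg_distrib]
        exact Finset.sum_congr rfl fun t _ => by ring
      rw [hcr1, hcr2]
      linarith
  obtain ⟨B, hB⟩ := (by open scoped MatrixOrder in exact CStarAlgebra.nonneg_iff_eq_star_mul_self.mp hpsd.nonneg : ∃ B, _ = star B * B)
  have hentry : ∀ i j, M i j = ∑ k, B k i * B k j := by
    intro i j
    rw [hB]
    simp [Matrix.star_eq_conjTranspose, Matrix.mul_apply, Matrix.conjTranspose_apply]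
  refine ⟨fun s k => B k (Sum.inl s), fun t k => B k (Sum.inr t), ?_, ?_, ?_⟩
  · intro s s'; rw [← hentry]; exact hMapp_ll s s'
  · intro t t'; rw [← hentry]; exact hMapp_rr t t'
  · intro s t; rw [← hentry]; exact hMapp_lr s t

lemma cross_sum {κ α β : Type*} [Fintype κ] [Fintype α] [Fintype β]
    (c : α → ℝ) (d : β → ℝ) (F : α → κ → ℝ) (G : β → κ → ℝ) :
    ∑ k, (∑ i, c i * F i k) * (∑ j, d j * G j k)
      = ∑ i, ∑ j, (c i * d j) * ∑ k, F i k * G j k := by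
  have h1 : ∀ k, (∑ i, c i * F i k) * (∑ j, d j * G j k)
      = ∑ i, ∑ j, (c i * d j) * (F i k * G j k) := by
    intro k
    rw [Finset.sum_mul_sum]
    exact Finset.sum_congr rfl fun i _ => Finset.sum_congr rfl fun j _ => by ring
  rw [Finset.sum_congr rfl fun k _ => h1 k]
  rw [Finset.sum_comm]
  refine Finset.sum_congr rfl fun i _ => ?_
  rw [Finset.sum_comm]
  refine Finset.sum_congr rfl fun j _ => ?_
  rw [Finset.mul_sum]

lemma cert_kron {S₁ T₁ S₂ T₂ : Type*} [Fintype S₁] [Fintype T₁] [Fintype S₂] [Fintype T₂]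
    {A₁ : Matrix S₁ T₁ ℝ} {A₂ : Matrix S₂ T₂ ℝ}
    {u₁ : S₁ → ℝ} {v₁ : T₁ → ℝ} {u₂ : S₂ → ℝ} {v₂ : T₂ → ℝ}
    (h₁ : Cert A₁ u₁ v₁) (h₂ : Cert A₂ u₂ v₂) :
    Cert (A₁ ⊗ₖ A₂) (fun p => u₁ p.1 * u₂ p.2) (fun p => v₁ p.1 * v₂ p.2) := by
  classical
  obtain ⟨p₁, q₁, hp₁, hq₁, hc₁⟩ := cert_factor h₁
  obtain ⟨p₂, q₂, hp₂, hq₂, hc₂⟩ := cert_factor h₂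
  intro a b
  set P : S₁ × S₂ → ((S₁ ⊕ T₁) × (S₂ ⊕ T₂)) → ℝ :=
    fun s k => p₁ s.1 k.1 * p₂ s.2 k.2 with hP
  set Qf : T₁ × T₂ → ((S₁ ⊕ T₁) × (S₂ ⊕ T₂)) → ℝ :=
    fun t k => q₁ t.1 k.1 * (-(q₂ t.2 k.2)) with hQf
  have dot : ∀ (f f' : (S₁ ⊕ T₁) → ℝ) (g g' : (S₂ ⊕ T₂) → ℝ),
      ∑ k : (S₁ ⊕ T₁) × (S₂ ⊕ T₂), (f k.1 * g k.2) * (f' k.1 * g' k.2)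
        = (∑ k₁, f k₁ * f' k₁) * (∑ k₂, g k₂ * g' k₂) := by
    intro f f' g g'
    rw [Finset.sum_mul_sum, Fintype.sum_prod_type]
    exact Finset.sum_congr rfl fun k₁ _ => Finset.sum_congr rfl fun k₂ _ => by ring
  have h0 : (0:ℝ) ≤ ∑ k, (∑ s, a s * P s k + ∑ t, b t * Qf t k)
      * (∑ s, a s * P s k + ∑ t, b t * Qf t k) :=
    Finset.sum_nonneg fun k _ => mul_self_nonneg _
  have hexp : ∑ k, (∑ s, a s * P s k + ∑ t, b t * Qf t k)
        * (∑ s, a s * P s k + ∑ t, b t * Qf t k)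
      = (∑ s, ∑ s', (a s * a s') * ∑ k, P s k * P s' k)
        + (∑ s, ∑ t, (a s * b t) * ∑ k, P s k * Qf t k)
        + (∑ t, ∑ s, (b t * a s) * ∑ k, Qf t k * P s k)
        + (∑ t, ∑ t', (b t * b t') * ∑ k, Qf t k * Qf t' k) := by
    have e0 : ∀ k, (∑ s, a s * P s k + ∑ t, b t * Qf t k)
        * (∑ s, a s * P s k + ∑ t, b t * Qf t k)
      = (∑ s, a s * P s k) * (∑ s, a s * P s k)
        + (∑ s, a s * P s k) * (∑ t, b t * Qf t k)
        + (∑ t, b t * Qf t k) * (∑ s, a s * P s k)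
        + (∑ t, b t * Qf t k) * (∑ t, b t * Qf t k) := fun k => by ring
    rw [Finset.sum_congr rfl fun k _ => e0 k]
    rw [Finset.sum_add_distrib, Finset.sum_add_distrib, Finset.sum_add_distrib]
    rw [cross_sum a a P P, cross_sum a b P Qf, cross_sum b a Qf P, cross_sum b b Qf Qf]
  have hPP : ∀ s s' : S₁ × S₂, ∑ k, P s k * P s' k
      = if s = s' then u₁ s.1 * u₂ s.2 else 0 := by
    intro s s'
    rw [show (∑ k, P s k * P s' k) = (∑ k₁, p₁ s.1 k₁ * p₁ s'.1 k₁)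
        * (∑ k₂, p₂ s.2 k₂ * p₂ s'.2 k₂) from dot _ _ _ _]
    rw [hp₁, hp₂]
    by_cases e1 : s.1 = s'.1 <;> by_cases e2 : s.2 = s'.2 <;>
      simp [Prod.ext_iff, e1, e2]
  have hQQ : ∀ t t' : T₁ × T₂, ∑ k, Qf t k * Qf t' k
      = if t = t' then v₁ t.1 * v₂ t.2 else 0 := by
    intro t t'
    rw [show (∑ k, Qf t k * Qf t' k) = (∑ k₁, q₁ t.1 k₁ * q₁ t'.1 k₁)
        * (∑ k₂, (-(q₂ t.2 k₂)) * (-(q₂ t'.2 k₂))) from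
      dot (q₁ t.1) (q₁ t'.1) (fun k₂ => -(q₂ t.2 k₂)) (fun k₂ => -(q₂ t'.2 k₂))]
    rw [show (∑ k₂, (-(q₂ t.2 k₂)) * (-(q₂ t'.2 k₂))) = ∑ k₂, q₂ t.2 k₂ * q₂ t'.2 k₂ from
      Finset.sum_congr rfl fun k₂ _ => by ring]
    rw [hq₁, hq₂]
    by_cases e1 : t.1 = t'.1 <;> by_cases e2 : t.2 = t'.2 <;>
      simp [Prod.ext_iff, e1, e2]
  have hPQ : ∀ (s : S₁ × S₂) (t : T₁ × T₂), ∑ k, P s k * Qf t k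
      = -(A₁ s.1 t.1 * A₂ s.2 t.2) := by
    intro s t
    rw [show (∑ k, P s k * Qf t k) = (∑ k₁, p₁ s.1 k₁ * q₁ t.1 k₁)
        * (∑ k₂, p₂ s.2 k₂ * (-(q₂ t.2 k₂))) from
      dot (p₁ s.1) (q₁ t.1) (p₂ s.2) (fun k₂ => -(q₂ t.2 k₂))]
    rw [show (∑ k₂, p₂ s.2 k₂ * (-(q₂ t.2 k₂))) = -∑ k₂, p₂ s.2 k₂ * q₂ t.2 k₂ from by
      rw [← Finset.sum_neg_distrib]; exact Finset.sum_congr rfl fun k₂ _ => by ring]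
    rw [hc₁, hc₂]
    ring
  have hQP : ∀ (t : T₁ × T₂) (s : S₁ × S₂), ∑ k, Qf t k * P s k
      = -(A₁ s.1 t.1 * A₂ s.2 t.2) := by
    intro t s
    rw [show (∑ k, Qf t k * P s k) = ∑ k, P s k * Qf t k from
      Finset.sum_congr rfl fun k _ => mul_comm _ _]
    exact hPQ s t
  have hdiagP : ∑ s, ∑ s', (a s * a s') * (if s = s' then u₁ s.1 * u₂ s.2 else 0)
      = ∑ s, (u₁ s.1 * u₂ s.2) * a s ^ 2 := by
    refine Finset.sum_congr rfl fun s _ => ?_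
    rw [Finset.sum_eq_single s]
    · rw [if_pos rfl]; ring
    · intro s' _ hs'; simp [Ne.symm hs']
    · intro hs; exact absurd (Finset.mem_univ s) hs
  have hdiagQ : ∑ t, ∑ t', (b t * b t') * (if t = t' then v₁ t.1 * v₂ t.2 else 0)
      = ∑ t, (v₁ t.1 * v₂ t.2) * b t ^ 2 := by
    refine Finset.sum_congr rfl fun t _ => ?_
    rw [Finset.sum_eq_single t]
    · rw [if_pos rfl]; ring
    · intro t' _ ht'; simp [Ne.symm ht']
    · intro ht; exact absurd (Finset.mem_univ t) ht
  have hcross1 : ∑ s, ∑ t, (a s * b t) * ∑ k, P s k * Qf t k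
      = -∑ s, ∑ t, (A₁ ⊗ₖ A₂) s t * (a s * b t) := by
    rw [← Finset.sum_neg_distrib]
    refine Finset.sum_congr rfl fun s _ => ?_
    rw [← Finset.sum_neg_distrib]
    refine Finset.sum_congr rfl fun t _ => ?_
    rw [hPQ s t]
    simp only [Matrix.kroneckerMap_apply]
    ring
  have hcross2 : ∑ t, ∑ s, (b t * a s) * ∑ k, Qf t k * P s k
      = -∑ s, ∑ t, (A₁ ⊗ₖ A₂) s t * (a s * b t) := by
    rw [Finset.sum_comm, ← Finset.sum_neg_distrib]
    refine Finset.sum_congr rfl fun s _ => ?_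
    rw [← Finset.sum_neg_distrib]
    refine Finset.sum_congr rfl fun t _ => ?_
    rw [hQP t s]
    simp only [Matrix.kroneckerMap_apply]
    ring
  rw [hexp] at h0
  rw [Finset.sum_congr rfl fun (s : S₁ × S₂) (_ : s ∈ Finset.univ) =>
    Finset.sum_congr rfl fun (s' : S₁ × S₂) (_ : s' ∈ Finset.univ) => by rw [hPP s s']] at h0
  rw [Finset.sum_congr rfl fun (t : T₁ × T₂) (_ : t ∈ Finset.univ) =>
    Finset.sum_congr rfl fun (t' : T₁ × T₂) (_ : t' ∈ Finset.univ) => by rw [hQQ t t']] at h0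
  rw [hdiagP, hdiagQ, hcross1, hcross2] at h0
  linarith

lemma cert_bound {A : Matrix S T ℝ} {u : S → ℝ} {v : T → ℝ} (h : Cert A u v)
    {r : ℝ} (hr : r ∈ biasSet A) : r ≤ ((∑ s, u s) + (∑ t, v t))/2 := by
  obtain ⟨d, x, y, hx, hy, hr'⟩ := exists_fam_of_mem_biasSet hr
  rw [hr']
  have e : 2 * famValue A x y = ∑ i : Fin d, 2 * (∑ s, ∑ t, A s t * (x s i * y t i)) := by
    unfold famValue
    rw [show (∑ s, ∑ t, A s t * ∑ i, x s i * y t i)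
        = ∑ s, ∑ t, ∑ i : Fin d, A s t * (x s i * y t i) from
      Finset.sum_congr rfl fun s _ => Finset.sum_congr rfl fun t _ => by rw [Finset.mul_sum]]
    rw [show (∑ s, ∑ t, ∑ i : Fin d, A s t * (x s i * y t i))
        = ∑ s, ∑ i : Fin d, ∑ t, A s t * (x s i * y t i) from
      Finset.sum_congr rfl fun s _ => Finset.sum_comm]
    rw [Finset.sum_comm, Finset.mul_sum]
  have hb : ∀ i : Fin d, 2 * (∑ s, ∑ t, A s t * (x s i * y t i))
      ≤ (∑ s, u s * (x s i)^2) + (∑ t, v t * (y t i)^2) :=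
    fun i => h (fun s => x s i) (fun t => y t i)
  have e2 : ∑ i : Fin d, ((∑ s, u s * (x s i)^2) + (∑ t, v t * (y t i)^2))
      = (∑ s, u s) + (∑ t, v t) := by
    rw [Finset.sum_add_distrib]
    congr 1
    · rw [Finset.sum_comm]
      refine Finset.sum_congr rfl fun s _ => ?_
      rw [← Finset.mul_sum]
      rw [show (∑ i, x s i ^ 2) = ∑ i, x s i * x s i from
        Finset.sum_congr rfl fun i _ => sq (x s i)]
      rw [hx s, mul_one]
    · rw [Finset.sum_comm]
      refine Finset.sum_congr rfl fun t _ => ?_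
      rw [← Finset.mul_sum]
      rw [show (∑ i, y t i ^ 2) = ∑ i, y t i * y t i from
        Finset.sum_congr rfl fun i _ => sq (y t i)]
      rw [hy t, mul_one]
  have : 2 * famValue A x y ≤ (∑ s, u s) + (∑ t, v t) := by
    rw [e, ← e2]
    exact Finset.sum_le_sum fun i _ => hb i
  linarith

lemma prod_dot {α β : Type*} [Fintype α] [Fintype β] (f f' : α → ℝ) (g g' : β → ℝ) :
    ∑ k : α × β, (f k.1 * g k.2) * (f' k.1 * g' k.2)
      = (∑ a, f a * f' a) * (∑ b, g b * g' b) := by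
  rw [Finset.sum_mul_sum, Fintype.sum_prod_type]
  exact Finset.sum_congr rfl fun a _ => Finset.sum_congr rfl fun b _ => by ring

lemma sum_prod_mul {α₁ β₁ α₂ β₂ : Type*} [Fintype α₁] [Fintype β₁] [Fintype α₂] [Fintype β₂]
    (F₁ : α₁ → β₁ → ℝ) (F₂ : α₂ → β₂ → ℝ) :
    ∑ s : α₁ × α₂, ∑ t : β₁ × β₂, F₁ s.1 t.1 * F₂ s.2 t.2
      = (∑ s₁, ∑ t₁, F₁ s₁ t₁) * (∑ s₂, ∑ t₂, F₂ s₂ t₂) := by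
  rw [Fintype.sum_prod_type]
  have h1 : ∀ (s₁ : α₁) (s₂ : α₂), ∑ t : β₁ × β₂, F₁ s₁ t.1 * F₂ s₂ t.2
      = (∑ t₁, F₁ s₁ t₁) * (∑ t₂, F₂ s₂ t₂) := by
    intro s₁ s₂
    rw [Finset.sum_mul_sum, Fintype.sum_prod_type]
  rw [Finset.sum_congr rfl fun s₁ (_ : s₁ ∈ Finset.univ) =>
    Finset.sum_congr rfl fun s₂ (_ : s₂ ∈ Finset.univ) => h1 s₁ s₂]
  rw [Finset.sum_congr rfl fun (s₁ : α₁) (_ : s₁ ∈ Finset.univ) =>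
    (Finset.mul_sum Finset.univ (fun s₂ : α₂ => ∑ t₂, F₂ s₂ t₂) (∑ t₁, F₁ s₁ t₁)).symm]
  rw [← Finset.sum_mul]

lemma sum_prod_split {α β : Type*} [Fintype α] [Fintype β] (f : α → ℝ) (g : β → ℝ) :
    ∑ p : α × β, f p.1 * g p.2 = (∑ a, f a) * (∑ b, g b) := by
  rw [Finset.sum_mul_sum, Fintype.sum_prod_type]

theorem kron_aux {S₁ T₁ S₂ T₂ : Type*} [Fintype S₁] [Fintype T₁] [Fintype S₂] [Fintype T₂]
    (A₁ : Matrix S₁ T₁ ℝ) (A₂ : Matrix S₂ T₂ ℝ) :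
    quantumBias (A₁ ⊗ₖ A₂) = quantumBias A₁ * quantumBias A₂ := by
  classical
  obtain ⟨great₁₂, -⟩ := core (A₁ ⊗ₖ A₂)
  obtain ⟨great₁, x₁, y₁, hx₁, hy₁, hv₁⟩ := core A₁
  obtain ⟨great₂, x₂, y₂, hx₂, hy₂, hv₂⟩ := core A₂
  obtain ⟨u₁, v₁, hu₁, hvv₁, hc₁⟩ := exists_cert A₁
  obtain ⟨u₂, v₂, hu₂, hvv₂, hc₂⟩ := exists_cert A₂
  apply le_antisymm
  · have hcert := cert_kron hc₁ hc₂
    have hbd := cert_bound hcert great₁₂.1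
    calc quantumBias (A₁ ⊗ₖ A₂)
        ≤ ((∑ s : S₁ × S₂, u₁ s.1 * u₂ s.2) + (∑ t : T₁ × T₂, v₁ t.1 * v₂ t.2))/2 := hbd
      _ = quantumBias A₁ * quantumBias A₂ := by
          rw [sum_prod_split u₁ u₂, sum_prod_split v₁ v₂, hu₁, hu₂, hvv₁, hvv₂]
          ring
  · set X : S₁ × S₂ → ((S₁ ⊕ T₁) × (S₂ ⊕ T₂)) → ℝ :=
      fun s k => x₁ s.1 k.1 * x₂ s.2 k.2 with hX
    set Y : T₁ × T₂ → ((S₁ ⊕ T₁) × (S₂ ⊕ T₂)) → ℝ :=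
      fun t k => y₁ t.1 k.1 * y₂ t.2 k.2 with hY
    have hXu : UnitFam X := by
      intro s
      rw [show (∑ k, X s k * X s k) = (∑ k₁, x₁ s.1 k₁ * x₁ s.1 k₁)
          * (∑ k₂, x₂ s.2 k₂ * x₂ s.2 k₂) from prod_dot _ _ _ _]
      rw [hx₁ s.1, hx₂ s.2, mul_one]
    have hYu : UnitFam Y := by
      intro t
      rw [show (∑ k, Y t k * Y t k) = (∑ k₁, y₁ t.1 k₁ * y₁ t.1 k₁)
          * (∑ k₂, y₂ t.2 k₂ * y₂ t.2 k₂) from prod_dot _ _ _ _]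
      rw [hy₁ t.1, hy₂ t.2, mul_one]
    have hfv : famValue (A₁ ⊗ₖ A₂) X Y = famValue A₁ x₁ y₁ * famValue A₂ x₂ y₂ := by
      unfold famValue
      rw [Finset.sum_congr rfl fun (s : S₁ × S₂) (_ : s ∈ Finset.univ) =>
        Finset.sum_congr rfl fun (t : T₁ × T₂) (_ : t ∈ Finset.univ) =>
          show (A₁ ⊗ₖ A₂) s t * ∑ k, X s k * Y t k
            = (A₁ s.1 t.1 * ∑ k₁, x₁ s.1 k₁ * y₁ t.1 k₁)
              * (A₂ s.2 t.2 * ∑ k₂, x₂ s.2 k₂ * y₂ t.2 k₂) from by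
        rw [show (∑ k, X s k * Y t k) = (∑ k₁, x₁ s.1 k₁ * y₁ t.1 k₁)
            * (∑ k₂, x₂ s.2 k₂ * y₂ t.2 k₂) from prod_dot _ _ _ _]
        simp only [Matrix.kroneckerMap_apply]
        ring]
      exact sum_prod_mul (fun s₁ t₁ => A₁ s₁ t₁ * ∑ k₁, x₁ s₁ k₁ * y₁ t₁ k₁)
        (fun s₂ t₂ => A₂ s₂ t₂ * ∑ k₂, x₂ s₂ k₂ * y₂ t₂ k₂)
    have hle := famValue_le (A₁ ⊗ₖ A₂) hXu hYu
    rw [hfv, hv₁, hv₂] at hle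
    exact hle

end QB

theorem quantumBias_kronecker
    {S₁ T₁ S₂ T₂ : Type*} [Fintype S₁] [Fintype T₁] [Fintype S₂] [Fintype T₂]
    [Nonempty S₁] [Nonempty T₁] [Nonempty S₂] [Nonempty T₂]
    (A₁ : Matrix S₁ T₁ ℝ) (A₂ : Matrix S₂ T₂ ℝ) :
    quantumBias (A₁ ⊗ₖ A₂) = quantumBias A₁ * quantumBias A₂ :=
  QB.kron_aux A₁ A₂
end
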